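/- Let 1 ≤ p ≤ h ≤ n, let v ∈ Λ_h(ℝⁿ) ∖ {0} be a simple h-vector and let β ∈ Λ^p(ℝⁿ) be such that ⟨v ⌟ α; β⟩ = 0 for all α ∈ Λ^{h−p}(ℝⁿ) (equivalently, ⟨v; α ∧ β⟩ = 0 for all α ∈ Λ^{h−p}(ℝⁿ)). Then β restricted to (span(v))^p vanishes, i.e. β(w₁, …, w_p) = 0 whenever w₁, …, w_p ∈ span(v). -/

import Mathlib

open MeasureTheory Metric Filter ENNReal Topology

noncomputable section

/-- Euclidean `n`-space. -/
abbrev Euc (n : ℕ) := EuclideanSpace ℝ (Fin n)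

/-- Coordinates of an element of the exterior algebra of `ℝⁿ` with respect to the
standard basis `{e_s : s ⊆ {1,…,n}}`.  The degree-`k` part corresponds to the
coefficients indexed by sets of cardinality `k`, i.e. to `Λ_k(ℝⁿ)` (resp. `Λ^k(ℝⁿ)`). -/
abbrev MV (n : ℕ) := Finset (Fin n) → ℝ

namespace MV

variable {n : ℕ}

/-- `v` belongs to `Λ_k(ℝⁿ)` (equivalently `Λ^k(ℝⁿ)`): only coefficients of degree `k`
are nonzero. -/
def IsGrade (k : ℕ) (v : MV n) : Prop := ∀ s : Finset (Fin n), s.card ≠ k → v s = 0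

/-- The duality pairing `⟨ζ; α⟩ := Σ_i ζ_i α_i`. -/
def pair (v w : MV n) : ℝ := ∑ s : Finset (Fin n), v s * w s

/-- The sign `(-1)^{#{(a,b) ∈ s × t : b < a}}` showing up in the wedge product of basis
elements: `e_s ∧ e_t = sign s t • e_{s ∪ t}` for disjoint `s`, `t`. -/
def sign (s t : Finset (Fin n)) : ℝ :=
  (-1 : ℝ) ^ ((s ×ˢ t).filter fun p => p.2 < p.1).card

/-- The wedge product, in coordinates. -/
def wedge (v w : MV n) : MV n :=
  fun u => ∑ s ∈ u.powerset, sign s (u \ s) * v s * w (u \ s)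

/-- The basis multivector `e_t` (resp. basis covector `dx_t`). -/
def delta (t : Finset (Fin n)) : MV n := fun s => if s = t then 1 else 0

/-- Interior multiplication `ζ ⌟ α`, characterized by `⟨ζ ⌟ α; β⟩ = ⟨ζ; α ∧ β⟩`. -/
def imul (v a : MV n) : MV n := fun t => pair v (wedge a (delta t))

/-- The canonical embedding `ℝⁿ = Λ_1(ℝⁿ) ↪ Λ_•(ℝⁿ)`. -/
def embed (x : Euc n) : MV n := fun s => ∑ i : Fin n, if s = {i} then x i else 0

/-- The canonical identification of the degree-one part of `Λ_•(ℝⁿ)` with `ℝⁿ`. -/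
def toVec (v : MV n) : Euc n := WithLp.toLp 2 (fun i => v {i})

/-- The wedge product `w 0 ∧ w 1 ∧ ⋯ ∧ w (k-1)` of a family of vectors of `ℝⁿ`. -/
def wedgeFam {k : ℕ} (w : Fin k → Euc n) : MV n :=
  (List.ofFn fun i => embed (w i)).foldr wedge (delta ∅)

/-- A `k`-vector is simple if it is a wedge product of `k` vectors of `ℝⁿ`. -/
def IsSimple (k : ℕ) (v : MV n) : Prop := ∃ w : Fin k → Euc n, v = wedgeFam w

/-- `span(v) := {v ⌟ α : α ∈ Λ^{k-1}(ℝⁿ)} ⊆ ℝⁿ`, for `v ∈ Λ_k(ℝⁿ)`. -/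
def spanSet (k : ℕ) (v : MV n) : Set (Euc n) :=
  {u | ∃ a : MV n, IsGrade (k - 1) a ∧ u = toVec (imul v a)}

/-- The (Euclidean) norm of a multivector. -/
def norm' (v : MV n) : ℝ := Real.sqrt (∑ s : Finset (Fin n), v s ^ 2)

/-- The exterior derivative of a (multi)covector field, in coordinates:
`(dψ)_u(x) = Σ_{i ∈ u} sign({i}, u \ {i}) ∂_i ψ_{u \ {i}}(x)`. -/
def extDeriv (ψ : Euc n → MV n) (x : Euc n) : MV n :=
  fun u => ∑ i ∈ u, sign {i} (u \ {i}) * fderiv ℝ ψ x (EuclideanSpace.single i 1) (u \ {i})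

end MV

/-- `x` is an `h`-superdensity point of `E` with respect to `λ`, i.e.
`λ(B_r(x) ∖ E) = λ(B_r(x))·o(r^h)` as `r → 0+`. -/
def SuperdensityPt {n : ℕ} (lam : Measure (Euc n)) (h : ℝ) (E : Set (Euc n)) (x : Euc n) :
    Prop :=
  ∀ ε > (0 : ℝ), ∃ r₀ > (0 : ℝ), ∀ r : ℝ, 0 < r → r < r₀ →
    lam (ball x r \ E) ≤ ENNReal.ofReal (ε * r ^ h) * lam (ball x r)

/-- The upper `s`-density `Θ^{*s}(μ, x) := limsup_{r→0+} μ(B_r(x))/(2r)^s`. -/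
def upperDensity {n : ℕ} (μ : Measure (Euc n)) (s : ℝ) (x : Euc n) : ℝ≥0∞ :=
  Filter.limsup (fun r : ℝ => μ (ball x r) / ENNReal.ofReal ((2 * r) ^ s)) (𝓝[>] 0)

/-- The lower `s`-density `Θ^s_*(μ, x) := liminf_{r→0+} μ(B_r(x))/(2r)^s`. -/
def lowerDensity {n : ℕ} (μ : Measure (Euc n)) (s : ℝ) (x : Euc n) : ℝ≥0∞ :=
  Filter.liminf (fun r : ℝ => μ (ball x r) / ENNReal.ofReal ((2 * r) ^ s)) (𝓝[>] 0)

/-- The upper derivative `D̄(λ, μ, x) := limsup_{r→0+} λ(B_r(x))/μ(B_r(x))`. -/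
def upperDeriv {n : ℕ} (lam μ : Measure (Euc n)) (x : Euc n) : ℝ≥0∞ :=
  Filter.limsup (fun r : ℝ => lam (ball x r) / μ (ball x r)) (𝓝[>] 0)

/-- The total variation `|τμ| = |τ|μ` of the current `T = τμ`. -/
def totalVar {n : ℕ} (τ : Euc n → MV n) (μ : Measure (Euc n)) : Measure (Euc n) :=
  μ.withDensity fun x => ENNReal.ofReal (MV.norm' (τ x))

/-- The Lebesgue-point conditions (3.2): the `μ`-averages of `τ` and of `|τ|` on `B_r(x)`
converge to `τ(x)` and `|τ(x)|` respectively, as `r → 0+`. -/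
def LebesguePt {n : ℕ} (μ : Measure (Euc n)) (τ : Euc n → MV n) (x : Euc n) : Prop :=
  Tendsto (fun r : ℝ => (μ (ball x r)).toReal⁻¹ • ∫ y in ball x r, τ y ∂μ)
    (𝓝[>] 0) (𝓝 (τ x)) ∧
  Tendsto (fun r : ℝ => (∫ y in ball x r, MV.norm' (τ y) ∂μ) / (μ (ball x r)).toReal)
    (𝓝[>] 0) (𝓝 (MV.norm' (τ x)))

/-- `K(τ, ω) := {y ∈ U : ⟨τ(y) ⌟ α; ω_y⟩ = 0 for all α ∈ Λ^{h-l}(ℝⁿ)}`, where `τ` is an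
`h`-vectorfield and `ω` a differential `l`-form on `U`. -/
def Kset {n : ℕ} (h l : ℕ) (U : Set (Euc n)) (τ : Euc n → MV n) (ω : Euc n → MV n) :
    Set (Euc n) :=
  {y ∈ U | ∀ a : MV n, MV.IsGrade (h - l) a → MV.pair (MV.imul (τ y) a) (ω y) = 0}

/-- `T = τμ` is a normal `h`-current on `Ω` with `∂T = τ'μ'` : both measures are finite,
`τ, τ'` are Borel and integrable, take values in `Λ_h` resp. `Λ_{h-1}`, and
`∫ ⟨τ'; ψ⟩ dμ' = ∫ ⟨τ; dψ⟩ dμ` for every smooth compactly supported `(h-1)`-form `ψ` on `Ω`. -/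
def IsNormalPair {n : ℕ} (h : ℕ) (Ω : Set (Euc n)) (μ μ' : Measure (Euc n))
    (τ τ' : Euc n → MV n) : Prop :=
  IsFiniteMeasure μ ∧ IsFiniteMeasure μ' ∧
  Measurable τ ∧ Measurable τ' ∧
  Integrable τ μ ∧ Integrable τ' μ' ∧
  (∀ x, MV.IsGrade h (τ x)) ∧ (∀ x, MV.IsGrade (h - 1) (τ' x)) ∧
  ∀ ψ : Euc n → MV n, ContDiff ℝ (⊤ : ℕ∞) ψ → HasCompactSupport ψ → tsupport ψ ⊆ Ω →
    (∀ y, MV.IsGrade (h - 1) (ψ y)) →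
    ∫ y, MV.pair (τ' y) (ψ y) ∂μ' = ∫ y, MV.pair (τ y) (MV.extDeriv ψ y) ∂μ

/-- `D` is a `k`-distribution of class `C^p` on `Ω`: each `D(x)` is a `k`-dimensional
subspace and, locally, `D` is the intersection of the kernels of `n - k` differential
1-forms of class `C^p` (the defining forms). -/
def IsDistribution {n : ℕ} (p : ℕ∞) (k : ℕ) (Ω : Set (Euc n))
    (D : Euc n → Submodule ℝ (Euc n)) : Prop :=
  (∀ x ∈ Ω, Module.finrank ℝ (D x) = k) ∧
  ∀ x ∈ Ω, ∃ U : Set (Euc n), U ⊆ Ω ∧ IsOpen U ∧ x ∈ U ∧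
    ∃ ω : Fin (n - k) → Euc n → (Euc n →L[ℝ] ℝ),
      (∀ j, ContDiffOn ℝ p (ω j) U) ∧
      ∀ y ∈ U, D y = ⨅ j, LinearMap.ker (ω j y : Euc n →ₗ[ℝ] ℝ)

/-- The tangency set `Γ(τ, D) := {x ∈ Ω : span(τ(x)) ⊆ D(x)}` of a `k`-vectorfield `τ`
with respect to a distribution `D`. -/
def tangencySet {n : ℕ} (k : ℕ) (Ω : Set (Euc n)) (τ : Euc n → MV n)
    (D : Euc n → Submodule ℝ (Euc n)) : Set (Euc n) :=
  {x ∈ Ω | MV.spanSet k (τ x) ⊆ (D x : Set (Euc n))}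

/-- A `C¹` `k`-distribution `D` is involutive at `x`: for some family of `C¹` defining
forms `ω⁽¹⁾, …, ω⁽ⁿ⁻ᵏ⁾` near `x`, each `(dω⁽ʲ⁾)_x` vanishes on `D(x) × D(x)`;
here `(dω)_x(u, v) = (Dω_x u)(v) − (Dω_x v)(u)`. -/
def InvolutiveAt {n : ℕ} (k : ℕ) (Ω : Set (Euc n)) (D : Euc n → Submodule ℝ (Euc n))
    (x : Euc n) : Prop :=
  ∃ U : Set (Euc n), U ⊆ Ω ∧ IsOpen U ∧ x ∈ U ∧
    ∃ ω : Fin (n - k) → Euc n → (Euc n →L[ℝ] ℝ),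
      (∀ j, ContDiffOn ℝ 1 (ω j) U) ∧
      (∀ y ∈ U, D y = ⨅ j, LinearMap.ker (ω j y : Euc n →ₗ[ℝ] ℝ)) ∧
      ∀ j, ∀ u ∈ D x, ∀ v ∈ D x, fderiv ℝ (ω j) x u v = fderiv ℝ (ω j) x v u

set_option linter.dupNamespace false
namespace MV
variable {n : ℕ}

/-! ### Basic linearity lemmas -/

lemma pair_comm (v w : MV n) : pair v w = pair w v := by
  unfold pair; exact Finset.sum_congr rfl fun s _ => mul_comm _ _

lemma pair_zero_left (w : MV n) : pair (0 : MV n) w = 0 := by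
  unfold pair; simp [Pi.zero_apply]

lemma pair_smul_right (c : ℝ) (v w : MV n) : pair v (c • w) = c * pair v w := by
  unfold pair; rw [Finset.mul_sum]; exact Finset.sum_congr rfl fun s _ => by
    simp [Pi.smul_apply, smul_eq_mul]; ring

lemma pair_sum_right {ι : Type*} (I : Finset ι) (v : MV n) (f : ι → MV n) :
    pair v (∑ i ∈ I, f i) = ∑ i ∈ I, pair v (f i) := by
  unfold pair; rw [Finset.sum_comm]
  exact Finset.sum_congr rfl fun s _ => by
    rw [← Finset.mul_sum]; congr 1; simp

lemma pair_delta_right (v : MV n) (t : Finset (Fin n)) : pair v (delta t) = v t := by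
  unfold pair delta; simp

lemma pair_delta_left (v : MV n) (t : Finset (Fin n)) : pair (delta t) v = v t := by
  rw [pair_comm, pair_delta_right]

lemma expand (v : MV n) : v = ∑ t : Finset (Fin n), v t • delta t := by
  funext s; simp only [Finset.sum_apply, Pi.smul_apply, delta, smul_eq_mul]
  simp

lemma wedge_smul_left (c : ℝ) (a b : MV n) : wedge (c • a) b = c • wedge a b := by
  funext u; simp only [wedge, Pi.smul_apply, smul_eq_mul, Finset.mul_sum]
  exact Finset.sum_congr rfl fun s _ => by ring

lemma wedge_smul_right (c : ℝ) (a b : MV n) : wedge a (c • b) = c • wedge a b := by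
  funext u; simp only [wedge, Pi.smul_apply, smul_eq_mul, Finset.mul_sum]
  exact Finset.sum_congr rfl fun s _ => by ring

lemma wedge_add_left (a b c : MV n) : wedge (a + b) c = wedge a c + wedge b c := by
  funext u; simp only [wedge, Pi.add_apply, ← Finset.sum_add_distrib]
  exact Finset.sum_congr rfl fun s _ => by ring

lemma wedge_add_right (a b c : MV n) : wedge a (b + c) = wedge a b + wedge a c := by
  funext u; simp only [wedge, Pi.add_apply, ← Finset.sum_add_distrib]
  exact Finset.sum_congr rfl fun s _ => by ring

lemma wedge_zero_left (b : MV n) : wedge (0 : MV n) b = 0 := by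
  funext u; simp [wedge]

lemma wedge_zero_right (a : MV n) : wedge a (0 : MV n) = 0 := by
  funext u; simp [wedge]

lemma wedge_sum_left {ι : Type*} (I : Finset ι) (f : ι → MV n) (b : MV n) :
    wedge (∑ i ∈ I, f i) b = ∑ i ∈ I, wedge (f i) b := by
  classical
  induction I using Finset.induction with
  | empty => simp [wedge_zero_left]
  | insert _ _ h ih => rename_i i I'
                       rw [Finset.sum_insert h, Finset.sum_insert h, wedge_add_left, ih]

lemma wedge_sum_right {ι : Type*} (I : Finset ι) (a : MV n) (f : ι → MV n) :
    wedge a (∑ i ∈ I, f i) = ∑ i ∈ I, wedge a (f i) := by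
  classical
  induction I using Finset.induction with
  | empty => simp [wedge_zero_right]
  | insert _ _ h ih => rename_i i I'
                       rw [Finset.sum_insert h, Finset.sum_insert h, wedge_add_right, ih]


/-! ### Sign lemmas -/

lemma sign_empty_left (t : Finset (Fin n)) : sign (∅ : Finset (Fin n)) t = 1 := by
  simp [sign]

lemma sign_empty_right (s : Finset (Fin n)) : sign s (∅ : Finset (Fin n)) = 1 := by
  simp [sign]

lemma sign_mul_self (s t : Finset (Fin n)) : sign s t * sign s t = 1 := by
  unfold sign; rw [← mul_pow]; norm_num

lemma sign_union_left {s t : Finset (Fin n)} (r : Finset (Fin n)) (h : Disjoint s t) :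
    sign (s ∪ t) r = sign s r * sign t r := by
  unfold sign
  rw [← pow_add]
  congr 1
  rw [Finset.union_product, Finset.filter_union, Finset.card_union_of_disjoint]
  exact Finset.disjoint_filter_filter <| Finset.disjoint_left.2 fun p hp hq => by
    simp only [Finset.mem_product] at hp hq
    exact (Finset.disjoint_left.1 h hp.1) hq.1

lemma sign_union_right (s : Finset (Fin n)) {t r : Finset (Fin n)} (h : Disjoint t r) :
    sign s (t ∪ r) = sign s t * sign s r := by
  unfold sign
  rw [← pow_add]
  congr 1
  rw [Finset.product_union, Finset.filter_union, Finset.card_union_of_disjoint]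
  exact Finset.disjoint_filter_filter <| Finset.disjoint_left.2 fun p hp hq => by
    simp only [Finset.mem_product] at hp hq
    exact (Finset.disjoint_left.1 h hp.2) hq.2

lemma sign_mul_sign_of_disjoint {s t : Finset (Fin n)} (h : Disjoint s t) :
    sign s t * sign t s = (-1 : ℝ) ^ (s.card * t.card) := by
  unfold sign
  rw [← pow_add]
  congr 1
  have hswap : ((t ×ˢ s).filter fun p => p.2 < p.1).card
      = ((s ×ˢ t).filter fun p => p.1 < p.2).card := by
    apply Finset.card_bij' (fun p _ => Prod.swap p) (fun p _ => Prod.swap p)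
    · intro p hp; simp only [Finset.mem_filter, Finset.mem_product] at hp ⊢
      exact ⟨⟨hp.1.2, hp.1.1⟩, hp.2⟩
    · intro p hp; simp only [Finset.mem_filter, Finset.mem_product] at hp ⊢
      exact ⟨⟨hp.1.2, hp.1.1⟩, hp.2⟩
    · intro p _; simp
    · intro p _; simp
  rw [hswap]
  have hcongr : (s ×ˢ t).filter (fun p => ¬ p.2 < p.1)
      = (s ×ˢ t).filter (fun p => p.1 < p.2) := by
    apply Finset.filter_congr
    intro p hp
    simp only [Finset.mem_product] at hp
    have hne : p.1 ≠ p.2 := fun he => (Finset.disjoint_left.1 h hp.1) (he ▸ hp.2)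
    rw [not_lt]
    exact ⟨fun hle => hle.lt_of_ne hne, le_of_lt⟩
  have hhh := Finset.card_filter_add_card_filter_not (s := s ×ˢ t)
    (p := fun p => p.2 < p.1)
  rw [hcongr] at hhh
  rw [hhh, Finset.card_product]
/-! ### Units, grading, delta products -/

lemma wedge_delta_empty (a : MV n) : wedge a (delta ∅) = a := by
  funext u
  unfold wedge
  rw [Finset.sum_eq_single u]
  · simp [delta, sign_empty_right]
  · intro s hs hne
    simp only [Finset.mem_powerset] at hs
    have : u \ s ≠ ∅ := fun he => hne (by
      have := Finset.sdiff_eq_empty_iff_subset.1 he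
      exact Finset.Subset.antisymm hs this)
    simp [delta, this]
  · intro hu; exact absurd (Finset.mem_powerset.2 (le_refl u)) hu

lemma delta_wedge_empty (a : MV n) : wedge (delta ∅) a = a := by
  funext u
  unfold wedge
  rw [Finset.sum_eq_single ∅]
  · simp [delta, sign_empty_left]
  · intro s hs hne; simp [delta, hne]
  · intro hu; exact absurd (Finset.mem_powerset.2 (Finset.empty_subset u)) hu

lemma isGrade_delta (t : Finset (Fin n)) : IsGrade t.card (delta t) := by
  intro s hs
  simp only [delta]
  rw [if_neg]; intro he; exact hs (he ▸ rfl)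

lemma isGrade_embed (x : Euc n) : IsGrade 1 (embed x) := by
  intro s hs
  unfold embed
  apply Finset.sum_eq_zero
  intro i _
  rw [if_neg]; intro he; exact hs (by rw [he, Finset.card_singleton])

lemma isGrade_wedge {k l : ℕ} {a b : MV n} (ha : IsGrade k a) (hb : IsGrade l b) :
    IsGrade (k + l) (wedge a b) := by
  intro u hu
  unfold wedge
  apply Finset.sum_eq_zero
  intro s hs
  simp only [Finset.mem_powerset] at hs
  by_cases h1 : s.card = k
  · by_cases h2 : (u \ s).card = l
    · exfalso; apply hu
      have := Finset.card_sdiff_add_card_eq_card hs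
      omega
    · rw [hb _ h2]; ring
  · rw [ha _ h1]; ring

lemma pair_eq_zero_of_grade {k l : ℕ} {a b : MV n} (ha : IsGrade k a) (hb : IsGrade l b)
    (hkl : k ≠ l) : pair a b = 0 := by
  unfold pair
  apply Finset.sum_eq_zero
  intro s _
  by_cases h1 : s.card = k
  · rw [hb s (by omega)]; ring
  · rw [ha s h1]; ring

lemma wedge_delta_delta (s t : Finset (Fin n)) :
    wedge (delta s) (delta t) =
      if Disjoint s t then sign s t • delta (s ∪ t) else 0 := by
  funext u
  by_cases hd : Disjoint s t
  · rw [if_pos hd]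
    by_cases hu : u = s ∪ t
    · subst hu
      unfold wedge
      rw [Finset.sum_eq_single_of_mem s
        (Finset.mem_powerset.2 Finset.subset_union_left)]
      · rw [Finset.union_sdiff_cancel_left hd]
        simp [delta]
      · intro b _ hne; simp [delta, hne]
    · unfold wedge
      rw [Finset.sum_eq_zero, Pi.smul_apply]
      · simp [delta, hu]
      · intro b hb
        simp only [Finset.mem_powerset] at hb
        by_cases hbs : b = s
        · subst hbs
          have : u \ b ≠ t := fun he => hu (by rw [← he, Finset.union_sdiff_of_subset hb])
          simp [delta, this]
        · simp [delta, hbs]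
  · rw [if_neg hd]
    unfold wedge
    rw [Finset.sum_eq_zero]
    · rfl
    · intro b hb
      simp only [Finset.mem_powerset] at hb
      by_cases hbs : b = s
      · subst hbs
        have : u \ b ≠ t := fun he => hd (he ▸ Finset.disjoint_sdiff.symm
          |>.symm)
        simp [delta, this]
      · simp [delta, hbs]
/-! ### Commutativity and associativity -/

lemma wedge_comm {k l : ℕ} {a b : MV n} (ha : IsGrade k a) (hb : IsGrade l b) :
    wedge a b = ((-1 : ℝ) ^ (k * l)) • wedge b a := by
  funext u
  rw [Pi.smul_apply, smul_eq_mul]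
  unfold wedge
  rw [Finset.mul_sum]
  apply Finset.sum_nbij' (i := fun s => u \ s) (j := fun s => u \ s)
  · intro s hs; exact Finset.mem_powerset.2 (Finset.sdiff_subset)
  · intro s hs; exact Finset.mem_powerset.2 (Finset.sdiff_subset)
  · intro s hs; exact Finset.sdiff_sdiff_eq_self (Finset.mem_powerset.1 hs)
  · intro s hs; exact Finset.sdiff_sdiff_eq_self (Finset.mem_powerset.1 hs)
  · intro s hs
    have hsub := Finset.mem_powerset.1 hs
    have e : u \ (u \ s) = s := Finset.sdiff_sdiff_eq_self hsub
    rw [e]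
    by_cases ha0 : a s = 0
    · rw [ha0]; ring
    · by_cases hb0 : b (u \ s) = 0
      · rw [hb0]; ring
      · have hk : s.card = k := by by_contra hne; exact ha0 (ha s hne)
        have hl : (u \ s).card = l := by by_contra hne; exact hb0 (hb _ hne)
        have hdisj : Disjoint s (u \ s) := Finset.disjoint_sdiff
        have h3 := sign_mul_sign_of_disjoint hdisj
        have h4 := sign_mul_self (u \ s) s
        rw [hk, hl] at h3
        have key : sign s (u \ s) = (-1 : ℝ) ^ (k * l) * sign (u \ s) s := by
          linear_combination sign (u \ s) s * h3 - sign s (u \ s) * h4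
        rw [key]; ring

lemma wedge_assoc (a b c : MV n) : wedge (wedge a b) c = wedge a (wedge b c) := by
  funext u
  have hL : wedge (wedge a b) c u
      = ∑ S ∈ u.powerset, ∑ s ∈ S.powerset,
          sign S (u \ S) * sign s (S \ s) * a s * b (S \ s) * c (u \ S) := by
    unfold wedge
    apply Finset.sum_congr rfl; intro S _
    rw [Finset.mul_sum, Finset.sum_mul]
    exact Finset.sum_congr rfl fun s _ => by ring
  have hR : wedge a (wedge b c) u
      = ∑ s ∈ u.powerset, ∑ t ∈ (u \ s).powerset,
          sign s (u \ s) * sign t ((u \ s) \ t) * a s * b t * c ((u \ s) \ t) := by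
    unfold wedge
    apply Finset.sum_congr rfl; intro s _
    rw [Finset.mul_sum]
    exact Finset.sum_congr rfl fun t _ => by ring
  rw [hL, hR, Finset.sum_sigma', Finset.sum_sigma']
  apply Finset.sum_nbij'
    (i := fun p => (⟨p.2, p.1 \ p.2⟩ : (_ : Finset (Fin n)) × Finset (Fin n)))
    (j := fun p => (⟨p.1 ∪ p.2, p.1⟩ : (_ : Finset (Fin n)) × Finset (Fin n)))
  · rintro ⟨S, s⟩ hp
    rw [Finset.mem_sigma] at hp ⊢
    obtain ⟨hSu, hsS⟩ := hp
    rw [Finset.mem_powerset] at hSu hsS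
    exact ⟨Finset.mem_powerset.2 (hsS.trans hSu),
      Finset.mem_powerset.2 (Finset.sdiff_subset_sdiff hSu (le_refl s))⟩
  · rintro ⟨s, t⟩ hp
    rw [Finset.mem_sigma] at hp ⊢
    obtain ⟨hsu, htu⟩ := hp
    rw [Finset.mem_powerset] at hsu htu
    refine ⟨Finset.mem_powerset.2 (Finset.union_subset hsu
      (htu.trans Finset.sdiff_subset)), Finset.mem_powerset.2 Finset.subset_union_left⟩
  · rintro ⟨S, s⟩ hp
    rw [Finset.mem_sigma] at hp
    obtain ⟨_, hsS⟩ := hp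
    rw [Finset.mem_powerset] at hsS
    show (⟨s ∪ (S \ s), s⟩ : (_ : Finset (Fin n)) × Finset (Fin n)) = ⟨S, s⟩
    rw [Finset.union_sdiff_of_subset hsS]
  · rintro ⟨s, t⟩ hp
    rw [Finset.mem_sigma] at hp
    obtain ⟨_, htu⟩ := hp
    rw [Finset.mem_powerset] at htu
    have hd : Disjoint s t := (Finset.disjoint_sdiff).mono_right htu
    show (⟨s, (s ∪ t) \ s⟩ : (_ : Finset (Fin n)) × Finset (Fin n)) = ⟨s, t⟩
    rw [Finset.union_sdiff_cancel_left hd]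
  · rintro ⟨S, s⟩ hp
    rw [Finset.mem_sigma] at hp
    obtain ⟨hSu, hsS⟩ := hp
    rw [Finset.mem_powerset] at hSu hsS
    have e1 : (u \ s) \ (S \ s) = u \ S := by
      ext x
      simp only [Finset.mem_sdiff, not_and, not_not]
      constructor
      · rintro ⟨⟨hxu, hxs⟩, h2⟩
        exact ⟨hxu, fun hxS => hxs (h2 hxS)⟩
      · rintro ⟨hxu, hxS⟩
        exact ⟨⟨hxu, fun hxs => hxS (hsS hxs)⟩, fun h3 => absurd h3 hxS⟩
    have e2 : s ∪ (S \ s) = S := Finset.union_sdiff_of_subset hsS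
    have e3 : u \ s = (S \ s) ∪ (u \ S) := by
      ext x
      simp only [Finset.mem_sdiff, Finset.mem_union]
      constructor
      · rintro ⟨hxu, hxs⟩
        by_cases hxS : x ∈ S
        · exact Or.inl ⟨hxS, hxs⟩
        · exact Or.inr ⟨hxu, hxS⟩
      · rintro (⟨hxS, hxs⟩ | ⟨hxu, hxS⟩)
        · exact ⟨hSu hxS, hxs⟩
        · exact ⟨hxu, fun hxs => hxS (hsS hxs)⟩
    have hst : Disjoint s (S \ s) := Finset.disjoint_sdiff
    have htr : Disjoint (S \ s) (u \ S) :=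
      (Finset.disjoint_sdiff).mono_left Finset.sdiff_subset
    show sign S (u \ S) * sign s (S \ s) * a s * b (S \ s) * c (u \ S)
      = sign s (u \ s) * sign (S \ s) ((u \ s) \ (S \ s)) * a s * b (S \ s)
        * c ((u \ s) \ (S \ s))
    have k1 := sign_union_left (u \ S) hst
    rw [e2] at k1
    have k2 : sign s (u \ s) = sign s (S \ s) * sign s (u \ S) := by
      rw [e3, sign_union_right s htr]
    rw [e1, k1, k2]
    ring
/-! ### pair/imul identities -/

lemma pair_sum_left {ι : Type*} (I : Finset ι) (f : ι → MV n) (w : MV n) :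
    pair (∑ i ∈ I, f i) w = ∑ i ∈ I, pair (f i) w := by
  rw [pair_comm, pair_sum_right]
  exact Finset.sum_congr rfl fun i _ => pair_comm _ _

lemma pair_smul_left (c : ℝ) (v w : MV n) : pair (c • v) w = c * pair v w := by
  rw [pair_comm, pair_smul_right, pair_comm]

lemma pair_imul_left (v a b : MV n) : pair (imul v a) b = pair v (wedge a b) := by
  have h0 : pair (imul v a) b = ∑ t : Finset (Fin n), pair v (wedge a (delta t)) * b t := rfl
  rw [h0]
  conv_rhs => rw [expand b]
  rw [wedge_sum_right, pair_sum_right]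
  apply Finset.sum_congr rfl; intro t _
  rw [wedge_smul_right, pair_smul_right]; ring

lemma pair_imul_right (w b ξ : MV n) : pair w (imul b ξ) = pair b (wedge ξ w) := by
  have h0 : pair w (imul b ξ) = ∑ t : Finset (Fin n), w t * pair b (wedge ξ (delta t)) := rfl
  rw [h0]
  conv_rhs => rw [expand w]
  rw [wedge_sum_right, pair_sum_right]
  apply Finset.sum_congr rfl; intro t _
  rw [wedge_smul_right, pair_smul_right]

lemma isGrade_imul {k l : ℕ} {γ a : MV n} (hγ : IsGrade k γ) (ha : IsGrade l a) :
    IsGrade (k - l) (imul γ a) := by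
  intro t ht
  show pair γ (wedge a (delta t)) = 0
  apply pair_eq_zero_of_grade hγ (isGrade_wedge ha (isGrade_delta t))
  omega

lemma embed_singleton (z : Euc n) (i : Fin n) : embed z {i} = z i := by
  unfold embed
  rw [Finset.sum_eq_single i]
  · simp
  · intro j _ hne
    rw [if_neg]
    intro he
    exact hne (Finset.singleton_injective he.symm)
  · intro hi; exact absurd (Finset.mem_univ i) hi

lemma embed_toVec {γ : MV n} (hγ : IsGrade 1 γ) : embed (toVec γ) = γ := by
  funext s
  by_cases hs : s.card = 1
  · obtain ⟨i₀, rfl⟩ := Finset.card_eq_one.1 hs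
    rw [embed_singleton]; rfl
  · rw [hγ s hs]
    unfold embed
    apply Finset.sum_eq_zero
    intro i _
    rw [if_neg]
    intro he; exact hs (by rw [he, Finset.card_singleton])

lemma embed_eq_sum (x : Euc n) : embed x = ∑ i : Fin n, x i • delta {i} := by
  funext s
  unfold embed delta
  rw [Finset.sum_apply]
  apply Finset.sum_congr rfl
  intro i _
  rw [Pi.smul_apply, smul_eq_mul]
  split_ifs <;> ring

lemma pair_embed_embed (y z : Euc n) : pair (embed y) (embed z) = ∑ i, y i * z i := by
  rw [embed_eq_sum y, pair_sum_left]
  apply Finset.sum_congr rfl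
  intro i _
  rw [pair_smul_left, pair_delta_left, embed_singleton]

lemma imul_embed_grade1 (y : Euc n) {ξ : MV n} (hξ : IsGrade 1 ξ) :
    imul (embed y) ξ = pair (embed y) ξ • delta ∅ := by
  funext t
  show pair (embed y) (wedge ξ (delta t)) = _
  by_cases ht : t = ∅
  · subst ht
    rw [wedge_delta_empty]
    simp [delta]
  · have htc : t.card ≠ 0 := by simpa [Finset.card_eq_zero] using ht
    rw [pair_eq_zero_of_grade (isGrade_embed y)
      (isGrade_wedge hξ (isGrade_delta t)) (by omega)]
    simp [delta, ht]
/-! ### imul linearity and basis formula -/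

lemma imul_zero_left (a : MV n) : imul (0 : MV n) a = 0 := by
  funext t; show pair 0 (wedge a (delta t)) = 0; exact pair_zero_left _

lemma imul_smul_left (c : ℝ) (γ a : MV n) : imul (c • γ) a = c • imul γ a := by
  funext t; show pair (c • γ) (wedge a (delta t)) = _
  rw [pair_smul_left]; rfl

lemma imul_smul_right (c : ℝ) (γ a : MV n) : imul γ (c • a) = c • imul γ a := by
  funext t; show pair γ (wedge (c • a) (delta t)) = _
  rw [wedge_smul_left, pair_smul_right]; rfl

lemma imul_sum_left {ι : Type*} (I : Finset ι) (f : ι → MV n) (a : MV n) :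
    imul (∑ i ∈ I, f i) a = ∑ i ∈ I, imul (f i) a := by
  funext t
  show pair (∑ i ∈ I, f i) (wedge a (delta t)) = _
  rw [pair_sum_left, Finset.sum_apply]
  rfl

lemma imul_sum_right {ι : Type*} (I : Finset ι) (γ : MV n) (f : ι → MV n) :
    imul γ (∑ i ∈ I, f i) = ∑ i ∈ I, imul γ (f i) := by
  funext t
  show pair γ (wedge (∑ i ∈ I, f i) (delta t)) = _
  rw [wedge_sum_left, pair_sum_right, Finset.sum_apply]
  rfl

lemma imul_expand_right (γ ξ : MV n) :
    imul γ ξ = ∑ r : Finset (Fin n), ξ r • imul γ (delta r) := by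
  conv_lhs => rw [expand ξ]
  rw [imul_sum_right]
  exact Finset.sum_congr rfl fun r _ => imul_smul_right _ _ _

lemma imul_expand_left (γ ξ : MV n) :
    imul γ ξ = ∑ s : Finset (Fin n), γ s • imul (delta s) ξ := by
  conv_lhs => rw [expand γ]
  rw [imul_sum_left]
  exact Finset.sum_congr rfl fun s _ => imul_smul_left _ _ _

lemma wedge_expand_left (a b : MV n) :
    wedge a b = ∑ s : Finset (Fin n), a s • wedge (delta s) b := by
  conv_lhs => rw [expand a]
  rw [wedge_sum_left]
  exact Finset.sum_congr rfl fun s _ => wedge_smul_left _ _ _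

lemma wedge_expand_right (a b : MV n) :
    wedge a b = ∑ t : Finset (Fin n), b t • wedge a (delta t) := by
  conv_lhs => rw [expand b]
  rw [wedge_sum_right]
  exact Finset.sum_congr rfl fun t _ => wedge_smul_right _ _ _

lemma imul_delta_delta_singleton (u : Finset (Fin n)) (m : Fin n) :
    imul (delta u) (delta {m})
      = if m ∈ u then sign {m} (u \ {m}) • delta (u \ {m}) else 0 := by
  funext t'
  show pair (delta u) (wedge (delta {m}) (delta t')) = _
  rw [wedge_delta_delta, pair_delta_left]
  by_cases hm : m ∈ u
  · rw [if_pos hm]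
    by_cases ht' : t' = u \ {m}
    · subst ht'
      have hd : Disjoint ({m} : Finset (Fin n)) (u \ {m}) := by simp
      rw [if_pos hd]
      have hu : {m} ∪ (u \ {m}) = u :=
        Finset.union_sdiff_of_subset (Finset.singleton_subset_iff.2 hm)
      rw [hu]
      simp [delta]
    · split_ifs with hd
      · have hne : u ≠ {m} ∪ t' := by
          intro he
          exact ht' (by rw [he, Finset.union_sdiff_cancel_left hd])
        simp [delta, (by rwa [Finset.insert_eq] : u ≠ insert m t'), ht']
      · simp [delta, ht']
  · rw [if_neg hm]
    split_ifs with hd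
    · have hne : u ≠ {m} ∪ t' := by
        intro he
        exact hm (by rw [he]; exact Finset.mem_union_left t' (Finset.mem_singleton_self m))
      simp [delta, (by rwa [Finset.insert_eq] : u ≠ insert m t')]
    · simp
/-! ### The antiderivation property on basis elements -/

lemma antideriv_basis (s t : Finset (Fin n)) (m : Fin n) :
    imul (wedge (delta s) (delta t)) (delta {m})
      = wedge (imul (delta s) (delta {m})) (delta t)
        + ((-1 : ℝ) ^ s.card) • wedge (delta s) (imul (delta t) (delta {m})) := by
  rw [imul_delta_delta_singleton s m, imul_delta_delta_singleton t m, wedge_delta_delta s t]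
  by_cases hd : Disjoint s t
  · rw [if_pos hd, imul_smul_left, imul_delta_delta_singleton]
    by_cases hms : m ∈ s
    · have hmt : m ∉ t := Finset.disjoint_left.1 hd hms
      have hmu : m ∈ s ∪ t := Finset.mem_union_left t hms
      rw [if_pos hmu, if_pos hms, if_neg hmt, wedge_zero_right, smul_zero, add_zero,
        wedge_smul_left, wedge_delta_delta]
      have hd1 : Disjoint (s \ {m}) t := hd.mono_left Finset.sdiff_subset
      rw [if_pos hd1]
      have hset : (s ∪ t) \ {m} = (s \ {m}) ∪ t := by
        rw [Finset.union_sdiff_distrib, Finset.sdiff_eq_self_of_disjoint (Finset.disjoint_singleton_right.2 hmt)]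
      rw [hset, smul_smul, smul_smul]
      congr 1
      have hdm : Disjoint ({m} : Finset (Fin n)) (s \ {m}) := by simp
      have hs' : {m} ∪ (s \ {m}) = s :=
        Finset.union_sdiff_of_subset (Finset.singleton_subset_iff.2 hms)
      have h1 : sign {m} ((s \ {m}) ∪ t) = sign {m} (s \ {m}) * sign {m} t :=
        sign_union_right _ hd1
      have h2 : sign s t = sign {m} t * sign (s \ {m}) t := by
        conv_lhs => rw [← hs']
        rw [sign_union_left t hdm]
      have h4 := sign_mul_self {m} t
      rw [h1, h2]
      linear_combination (sign (s \ {m}) t * sign {m} (s \ {m})) * h4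
    · by_cases hmt : m ∈ t
      · have hmu : m ∈ s ∪ t := Finset.mem_union_right s hmt
        rw [if_pos hmu, if_neg hms, if_pos hmt, wedge_zero_left, zero_add,
          wedge_smul_right, wedge_delta_delta]
        have hd1 : Disjoint s (t \ {m}) := hd.mono_right Finset.sdiff_subset
        rw [if_pos hd1]
        have hset : (s ∪ t) \ {m} = s ∪ (t \ {m}) := by
          rw [Finset.union_sdiff_distrib, Finset.sdiff_eq_self_of_disjoint (Finset.disjoint_singleton_right.2 hms)]
        rw [hset]
        simp only [smul_smul]
        congr 1
        have hdm : Disjoint ({m} : Finset (Fin n)) (t \ {m}) := by simp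
        have ht' : {m} ∪ (t \ {m}) = t :=
          Finset.union_sdiff_of_subset (Finset.singleton_subset_iff.2 hmt)
        have h1 : sign {m} (s ∪ (t \ {m})) = sign {m} s * sign {m} (t \ {m}) :=
          sign_union_right _ hd1
        have h2 : sign s t = sign s {m} * sign s (t \ {m}) := by
          conv_lhs => rw [← ht']
          rw [sign_union_right s hdm]
        have h3 := sign_mul_sign_of_disjoint (Finset.disjoint_singleton_right.2 hms)
        simp only [Finset.card_singleton, mul_one] at h3
        rw [h1, h2]
        linear_combination (sign s (t \ {m}) * sign {m} (t \ {m})) * h3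
      · have hmu : m ∉ s ∪ t := by simp [hms, hmt]
        rw [if_neg hmu, if_neg hms, if_neg hmt, wedge_zero_left, wedge_zero_right,
          smul_zero, smul_zero, add_zero]
  · rw [if_neg hd, imul_zero_left]
    by_cases hms : m ∈ s
    · rw [if_pos hms, wedge_smul_left, wedge_delta_delta]
      by_cases hmt : m ∈ t
      · rw [if_pos hmt, wedge_smul_right, wedge_delta_delta]
        by_cases hd2 : Disjoint (s \ {m}) t
        · have hd3 : Disjoint s (t \ {m}) := by
            rw [Finset.disjoint_left]
            intro x hxs hxt'
            obtain ⟨hxt, hxm⟩ := Finset.mem_sdiff.1 hxt'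
            rw [Finset.mem_singleton] at hxm
            exact Finset.disjoint_left.1 hd2
              (Finset.mem_sdiff.2 ⟨hxs, by simpa using hxm⟩) hxt
          rw [if_pos hd2, if_pos hd3]
          have hset1 : (s \ {m}) ∪ t = s ∪ t := by
            ext x
            simp only [Finset.mem_union, Finset.mem_sdiff, Finset.mem_singleton]
            constructor
            · rintro (⟨h1, _⟩ | h2)
              · exact Or.inl h1
              · exact Or.inr h2
            · rintro (h1 | h2)
              · by_cases hxm : x = m
                · exact Or.inr (hxm ▸ hmt)
                · exact Or.inl ⟨h1, hxm⟩
              · exact Or.inr h2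
          have hset2 : s ∪ (t \ {m}) = s ∪ t := by
            ext x
            simp only [Finset.mem_union, Finset.mem_sdiff, Finset.mem_singleton]
            constructor
            · rintro (h1 | ⟨h2, _⟩)
              · exact Or.inl h1
              · exact Or.inr h2
            · rintro (h1 | h2)
              · exact Or.inl h1
              · by_cases hxm : x = m
                · exact Or.inl (hxm ▸ hms)
                · exact Or.inr ⟨h2, hxm⟩
          rw [hset1, hset2, smul_smul, smul_smul, smul_smul, ← add_smul]
          have hzero : sign {m} (s \ {m}) * sign (s \ {m}) t
              + (-1 : ℝ) ^ s.card * sign {m} (t \ {m}) * sign s (t \ {m}) = 0 := by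
            have hdm : Disjoint ({m} : Finset (Fin n)) (s \ {m}) := by simp
            have hdm' : Disjoint ({m} : Finset (Fin n)) (t \ {m}) := by simp
            have hs' : {m} ∪ (s \ {m}) = s :=
              Finset.union_sdiff_of_subset (Finset.singleton_subset_iff.2 hms)
            have ht' : {m} ∪ (t \ {m}) = t :=
              Finset.union_sdiff_of_subset (Finset.singleton_subset_iff.2 hmt)
            have h1 : sign (s \ {m}) t
                = sign (s \ {m}) {m} * sign (s \ {m}) (t \ {m}) := by
              conv_lhs => rw [← ht']
              rw [sign_union_right _ hdm']
            have h2 : sign s (t \ {m})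
                = sign {m} (t \ {m}) * sign (s \ {m}) (t \ {m}) := by
              conv_lhs => rw [← hs']
              rw [sign_union_left _ hdm]
            have h3 := sign_mul_sign_of_disjoint hdm
            simp only [Finset.card_singleton, one_mul] at h3
            have h4 := sign_mul_self {m} (t \ {m})
            have h5 : (-1 : ℝ) ^ s.card = (-1 : ℝ) ^ ((s \ {m}).card) * (-1) := by
              have hc1 : 0 < s.card := Finset.card_pos.2 ⟨m, hms⟩
              have hc2 : (s \ {m}).card = s.card - 1 := by
                rw [Finset.card_sdiff_of_subset (Finset.singleton_subset_iff.2 hms),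
                  Finset.card_singleton]
              have : s.card = (s \ {m}).card + 1 := by omega
              rw [this, pow_succ]
            rw [h1, h2, h5]
            linear_combination (sign (s \ {m}) (t \ {m})) * h3
              - ((-1 : ℝ) ^ ((s \ {m}).card) * sign (s \ {m}) (t \ {m})) * h4
          rw [hzero, zero_smul]
        · have hd3 : ¬ Disjoint s (t \ {m}) := by
            intro hdis
            apply hd2
            rw [Finset.disjoint_left]
            intro x hxs' hxt
            obtain ⟨hxs, hxm⟩ := Finset.mem_sdiff.1 hxs'
            rw [Finset.mem_singleton] at hxm
            exact Finset.disjoint_left.1 hdis hxs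
              (Finset.mem_sdiff.2 ⟨hxt, by simpa using hxm⟩)
          rw [if_neg hd2, if_neg hd3]
          simp
      · rw [if_neg hmt, wedge_zero_right, smul_zero, add_zero]
        have hnd : ¬ Disjoint (s \ {m}) t := by
          intro hdis
          apply hd
          rw [Finset.disjoint_left]
          intro x hxs hxt
          have hxm : x ≠ m := fun he => hmt (he ▸ hxt)
          exact Finset.disjoint_left.1 hdis
            (Finset.mem_sdiff.2 ⟨hxs, by simpa using hxm⟩) hxt
        rw [if_neg hnd, smul_zero]
    · rw [if_neg hms, wedge_zero_left, zero_add]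
      by_cases hmt : m ∈ t
      · rw [if_pos hmt, wedge_smul_right, wedge_delta_delta]
        have hnd : ¬ Disjoint s (t \ {m}) := by
          intro hdis
          apply hd
          rw [Finset.disjoint_left]
          intro x hxs hxt
          have hxm : x ≠ m := fun he => hms (he ▸ hxs)
          exact Finset.disjoint_left.1 hdis hxs
            (Finset.mem_sdiff.2 ⟨hxt, by simpa using hxm⟩)
        rw [if_neg hnd, smul_zero, smul_zero]
      · rw [if_neg hmt, wedge_zero_right, smul_zero]
/-! ### The antiderivation property -/

lemma imul_wedge_antideriv {k : ℕ} {a : MV n} (ha : IsGrade k a) (b : MV n) {ξ : MV n}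
    (hξ : IsGrade 1 ξ) :
    imul (wedge a b) ξ
      = wedge (imul a ξ) b + ((-1 : ℝ) ^ k) • wedge a (imul b ξ) := by
  have H2 : ∀ s t : Finset (Fin n), s.card = k → ∀ m : Fin n,
      imul (wedge (delta s) (delta t)) (delta {m})
        = wedge (imul (delta s) (delta {m})) (delta t)
          + ((-1 : ℝ) ^ k) • wedge (delta s) (imul (delta t) (delta {m})) := by
    intro s t hsk m
    rw [← hsk]
    exact antideriv_basis s t m
  have H1 : ∀ s : Finset (Fin n), s.card = k → ∀ m : Fin n,
      imul (wedge (delta s) b) (delta {m})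
        = wedge (imul (delta s) (delta {m})) b
          + ((-1 : ℝ) ^ k) • wedge (delta s) (imul b (delta {m})) := by
    intro s hsk m
    have e1 : imul (wedge (delta s) b) (delta {m})
        = ∑ t : Finset (Fin n), b t • imul (wedge (delta s) (delta t)) (delta {m}) := by
      rw [wedge_expand_right (delta s) b, imul_sum_left]
      exact Finset.sum_congr rfl fun t _ => by rw [imul_smul_left]
    have e2 : wedge (imul (delta s) (delta {m})) b
        = ∑ t : Finset (Fin n), b t • wedge (imul (delta s) (delta {m})) (delta t) :=
      wedge_expand_right _ b
    have e3 : wedge (delta s) (imul b (delta {m}))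
        = ∑ t : Finset (Fin n), b t • wedge (delta s) (imul (delta t) (delta {m})) := by
      rw [imul_expand_left b (delta {m}), wedge_sum_right]
      exact Finset.sum_congr rfl fun t _ => by rw [wedge_smul_right]
    rw [e1, e2, e3, Finset.smul_sum, ← Finset.sum_add_distrib]
    apply Finset.sum_congr rfl
    intro t _
    rw [H2 s t hsk m, smul_add, smul_comm (b t) ((-1 : ℝ) ^ k)]
  have H0 : ∀ m : Fin n, imul (wedge a b) (delta {m})
      = wedge (imul a (delta {m})) b + ((-1 : ℝ) ^ k) • wedge a (imul b (delta {m})) := by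
    intro m
    have e1 : imul (wedge a b) (delta {m})
        = ∑ s : Finset (Fin n), a s • imul (wedge (delta s) b) (delta {m}) := by
      rw [wedge_expand_left a b, imul_sum_left]
      exact Finset.sum_congr rfl fun s _ => by rw [imul_smul_left]
    have e2 : wedge (imul a (delta {m})) b
        = ∑ s : Finset (Fin n), a s • wedge (imul (delta s) (delta {m})) b := by
      rw [imul_expand_left a (delta {m}), wedge_sum_left]
      exact Finset.sum_congr rfl fun s _ => by rw [wedge_smul_left]
    have e3 : wedge a (imul b (delta {m}))
        = ∑ s : Finset (Fin n), a s • wedge (delta s) (imul b (delta {m})) :=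
      wedge_expand_left a _
    rw [e1, e2, e3, Finset.smul_sum, ← Finset.sum_add_distrib]
    apply Finset.sum_congr rfl
    intro s _
    by_cases h0 : a s = 0
    · simp [h0]
    · have hsk : s.card = k := by by_contra hne; exact h0 (ha s hne)
      rw [H1 s hsk m, smul_add, smul_comm (a s) ((-1 : ℝ) ^ k)]
  have e1 : imul (wedge a b) ξ
      = ∑ r : Finset (Fin n), ξ r • imul (wedge a b) (delta r) := imul_expand_right _ ξ
  have e2 : wedge (imul a ξ) b
      = ∑ r : Finset (Fin n), ξ r • wedge (imul a (delta r)) b := by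
    rw [imul_expand_right a ξ, wedge_sum_left]
    exact Finset.sum_congr rfl fun r _ => by rw [wedge_smul_left]
  have e3 : wedge a (imul b ξ)
      = ∑ r : Finset (Fin n), ξ r • wedge a (imul b (delta r)) := by
    rw [imul_expand_right b ξ, wedge_sum_right]
    exact Finset.sum_congr rfl fun r _ => by rw [wedge_smul_right]
  rw [e1, e2, e3, Finset.smul_sum, ← Finset.sum_add_distrib]
  apply Finset.sum_congr rfl
  intro r _
  by_cases h0 : ξ r = 0
  · simp [h0]
  · have hr1 : r.card = 1 := by by_contra hne; exact h0 (hξ r hne)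
    obtain ⟨m, rfl⟩ := Finset.card_eq_one.1 hr1
    rw [H0 m, smul_add, smul_comm (ξ {m}) ((-1 : ℝ) ^ k)]
/-! ### Wedge families -/

open scoped RealInnerProductSpace

lemma pair_sub_right (v a b : MV n) : pair v (a - b) = pair v a - pair v b := by
  unfold pair
  rw [← Finset.sum_sub_distrib]
  exact Finset.sum_congr rfl fun s _ => by simp [Pi.sub_apply]; ring

lemma embed_zero : embed (0 : Euc n) = 0 := by
  funext s; simp [embed]

lemma embed_add (x y : Euc n) : embed (x + y) = embed x + embed y := by
  funext s
  simp only [embed, Pi.add_apply]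
  rw [← Finset.sum_add_distrib]
  exact Finset.sum_congr rfl fun i _ => by split_ifs <;> simp

lemma embed_smul (c : ℝ) (x : Euc n) : embed (c • x) = c • embed x := by
  funext s
  simp only [embed, Pi.smul_apply, smul_eq_mul, Finset.mul_sum]
  exact Finset.sum_congr rfl fun i _ => by split_ifs <;> simp

/-- Wedge of a list of vectors. -/
def listWedge (l : List (Euc n)) : MV n := (l.map embed).foldr wedge (delta ∅)

lemma listWedge_cons (y : Euc n) (l : List (Euc n)) :
    listWedge (y :: l) = wedge (embed y) (listWedge l) := rfl

lemma wedgeFam_eq_listWedge {k : ℕ} (w : Fin k → Euc n) :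
    wedgeFam w = listWedge (List.ofFn w) := by
  unfold wedgeFam listWedge
  rw [List.map_ofFn]
  rfl

lemma imul_listWedge_eq_zero {ξ : MV n} (hξ : IsGrade 1 ξ) :
    ∀ l : List (Euc n), (∀ y ∈ l, pair (embed y) ξ = 0) → imul (listWedge l) ξ = 0 := by
  intro l
  induction l with
  | nil =>
    intro _
    funext t
    show pair (delta ∅) (wedge ξ (delta t)) = 0
    rw [pair_delta_left]
    exact (isGrade_wedge hξ (isGrade_delta t)) ∅ (by simp only [Finset.card_empty]; omega)
  | cons y l ih =>
    intro hl
    rw [listWedge_cons, imul_wedge_antideriv (isGrade_embed y) _ hξ,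
      imul_embed_grade1 y hξ, hl y List.mem_cons_self, zero_smul, wedge_zero_left,
      ih fun z hz => hl z (List.mem_cons_of_mem y hz), wedge_zero_right, smul_zero,
      add_zero]

lemma wedge_embed_self (x : Euc n) : wedge (embed x) (embed x) = 0 := by
  have h := wedge_comm (isGrade_embed x) (isGrade_embed x)
  rw [show (1 * 1 : ℕ) = 1 from rfl, pow_one, neg_one_smul] at h
  have h2 : wedge (embed x) (embed x) + wedge (embed x) (embed x) = 0 := by
    nth_rewrite 2 [h]
    exact add_neg_cancel _
  have h3 : (2 : ℝ) • wedge (embed x) (embed x) = 0 := by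
    rw [two_smul]; exact h2
  exact (smul_eq_zero.mp h3).resolve_left two_ne_zero

lemma embed_wedge_listWedge_eq_zero :
    ∀ (l : List (Euc n)) (y : Euc n), y ∈ l → wedge (embed y) (listWedge l) = 0 := by
  intro l
  induction l with
  | nil => intro y hy; exact absurd hy List.not_mem_nil
  | cons c l ih =>
    intro y hy
    rw [listWedge_cons, ← wedge_assoc]
    rcases List.mem_cons.1 hy with hyc | hyl
    · subst hyc
      rw [wedge_embed_self, wedge_zero_left]
    · have h : wedge (embed y) (embed c) = (-1 : ℝ) • wedge (embed c) (embed y) := by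
        simpa using wedge_comm (isGrade_embed y) (isGrade_embed c)
      rw [h, wedge_smul_left, wedge_assoc, ih y hyl, wedge_zero_right, smul_zero]

lemma embed_wedge_wedgeFam_eq_zero {h' : ℕ} (u : Fin h' → Euc n) {x : Euc n}
    (hx : x ∈ Submodule.span ℝ (Set.range u)) : wedge (embed x) (wedgeFam u) = 0 := by
  rw [wedgeFam_eq_listWedge]
  induction hx using Submodule.span_induction with
  | mem z hz =>
    obtain ⟨j, rfl⟩ := hz
    exact embed_wedge_listWedge_eq_zero _ _ (by simp [List.mem_ofFn])
  | zero => rw [embed_zero, wedge_zero_left]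
  | add x y _ _ hx1 hy1 => rw [embed_add, wedge_add_left, hx1, hy1, add_zero]
  | smul c x _ hx1 => rw [embed_smul, wedge_smul_left, hx1, smul_zero]

lemma inner_eq_sum (w w' : Euc n) : ⟪w, w'⟫ = ∑ i, w i * w' i := by
  simp [PiLp.inner_apply, RCLike.inner_apply, conj_trivial]
  exact Finset.sum_congr rfl fun _ _ => mul_comm _ _

lemma toVec_imul_mem_span {h' k : ℕ} (u : Fin h' → Euc n) {a : MV n} (ha : IsGrade k a) :
    toVec (imul (wedgeFam u) a) ∈ Submodule.span ℝ (Set.range u) := by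
  set K := Submodule.span ℝ (Set.range u) with hK
  set x : Euc n := toVec (imul (wedgeFam u) a) with hxdef
  set y := K.orthogonalProjectionOnto x with hydef
  have hzorth : x - ↑y ∈ Kᗮ := Submodule.sub_starProjection_mem_orthogonal (K := K) x
  set z : Euc n := x - ↑y with hzdef
  have hyz : ∀ j, ⟪u j, z⟫ = 0 := fun j =>
    (Submodule.mem_orthogonal K z).1 hzorth (u j)
      (Submodule.subset_span (Set.mem_range_self j))
  have hkey : ⟪z, x⟫ = 0 := by
    rw [inner_eq_sum]
    have h1 : ∑ i, z i * x i = pair (wedgeFam u) (wedge a (embed z)) := by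
      rw [embed_eq_sum z, wedge_sum_right, pair_sum_right]
      exact Finset.sum_congr rfl fun i _ => by
        rw [wedge_smul_right, pair_smul_right]
        rfl
    rw [h1, wedge_comm ha (isGrade_embed z), pair_smul_right, ← pair_imul_left]
    have h2 : imul (wedgeFam u) (embed z) = 0 := by
      rw [wedgeFam_eq_listWedge]
      apply imul_listWedge_eq_zero (isGrade_embed z)
      intro w hw
      obtain ⟨j, rfl⟩ := List.mem_ofFn.1 hw
      rw [pair_embed_embed, ← inner_eq_sum]
      exact hyz j
    rw [h2, pair_zero_left, mul_zero]
  have hzz : ⟪z, z⟫ = 0 := by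
    have hzy : ⟪z, (y : Euc n)⟫ = 0 :=
      (Submodule.mem_orthogonal' K z).1 hzorth (↑y) y.2
    rw [hzdef]
    rw [inner_sub_right, hkey]  -- careful: z fixed; ⟪z, x - y⟫ = ⟪z,x⟫ - ⟪z,y⟫
    rw [hzy]
    ring
  have hz0 : z = 0 := inner_self_eq_zero.1 hzz
  have : x = ↑y := by
    have := sub_eq_zero.1 hz0
    exact this
  rw [this]
  exact y.2
end MV

/-- **Proposition 2.2.** Let `1 ≤ p ≤ h ≤ n`, let `v ∈ Λ_h(ℝⁿ) ∖ {0}` be simple and let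
`β ∈ Λ^p(ℝⁿ)` satisfy `⟨v ⌟ α; β⟩ = 0` for all `α ∈ Λ^{h-p}(ℝⁿ)`.  Then `β` vanishes on
`(span v)^p`, i.e. `β(w₁, …, w_p) = ⟨w₁ ∧ ⋯ ∧ w_p; β⟩ = 0` whenever `w₁, …, w_p ∈ span v`. -/
theorem statement1 {n h p : ℕ} (hp : 1 ≤ p) (hph : p ≤ h) (hhn : h ≤ n)
    (v : MV n) (hgv : MV.IsGrade h v) (hv0 : v ≠ 0) (hsimple : MV.IsSimple h v)
    (β : MV n) (hgβ : MV.IsGrade p β)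
    (hyp : ∀ a : MV n, MV.IsGrade (h - p) a → MV.pair (MV.imul v a) β = 0) :
    ∀ w : Fin p → Euc n, (∀ i, w i ∈ MV.spanSet h v) → MV.pair (MV.wedgeFam w) β = 0 := by
  classical
  obtain ⟨u, hu⟩ := hsimple
  have hh1 : 1 ≤ h := le_trans hp hph
  -- main induction on the number of vectors
  have C : ∀ q : ℕ, ∀ β' : MV n,
      (∀ a : MV n, MV.IsGrade (h - (q + 1)) a → MV.pair v (MV.wedge a β') = 0) →
      ∀ w : Fin (q + 1) → Euc n, (∀ i, w i ∈ MV.spanSet h v) →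
        MV.pair (MV.wedgeFam w) β' = 0 := by
    intro q
    induction q with
    | zero =>
      intro β' hβ' w hw
      obtain ⟨a₀, ha₀, hw0⟩ := hw 0
      have h1 : MV.wedgeFam w = MV.embed (w 0) := by
        unfold MV.wedgeFam
        rw [show (List.ofFn fun i : Fin 1 => MV.embed (w i)) = [MV.embed (w 0)] by
          simp [List.ofFn_succ], List.foldr_cons, List.foldr_nil, MV.wedge_delta_empty]
      have hgr : MV.IsGrade 1 (MV.imul v a₀) := by
        have h2 := MV.isGrade_imul hgv ha₀
        rwa [show h - (h - 1) = 1 by omega] at h2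
      rw [h1, hw0, MV.embed_toVec hgr, MV.pair_imul_left]
      exact hβ' a₀ ha₀
    | succ q ih =>
      intro β' hβ' w hw
      set x := w 0 with hxdef
      set w' : Fin (q + 1) → Euc n := fun i => w i.succ with hw'def
      have hx : MV.wedge (MV.embed x) v = 0 := by
        obtain ⟨a₀, ha₀, hw0⟩ := hw 0
        rw [hxdef, hw0, hu]
        exact MV.embed_wedge_wedgeFam_eq_zero u (MV.toVec_imul_mem_span u ha₀)
      have hfam : MV.wedgeFam w = MV.wedge (MV.embed x) (MV.wedgeFam w') := by
        unfold MV.wedgeFam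
        rw [List.ofFn_succ, List.foldr_cons]
      set β'' := MV.imul β' (MV.embed x) with hβ''def
      have hβ2 : ∀ a : MV n, MV.IsGrade (h - (q + 1)) a →
          MV.pair v (MV.wedge a β'') = 0 := by
        intro a ha
        have hanti := MV.imul_wedge_antideriv (k := h - (q + 1)) ha β'
          (MV.isGrade_embed x)
        have h2 : MV.pair v (MV.imul (MV.wedge a β') (MV.embed x)) = 0 := by
          rw [MV.pair_imul_right, hx, MV.pair_comm,
            MV.pair_zero_left]
        have h3 : MV.pair v (MV.wedge (MV.imul a (MV.embed x)) β') = 0 := by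
          apply hβ'
          have h4 := MV.isGrade_imul ha (MV.isGrade_embed x)
          rwa [show h - (q + 1) - 1 = h - (q + 1 + 1) by omega] at h4
        have h4 : MV.pair v (((-1 : ℝ) ^ (h - (q + 1))) • MV.wedge a β'') = 0 := by
          have h5 : ((-1 : ℝ) ^ (h - (q + 1))) • MV.wedge a β''
              = MV.imul (MV.wedge a β') (MV.embed x)
                - MV.wedge (MV.imul a (MV.embed x)) β' := by
            rw [hanti, add_sub_cancel_left]
          rw [h5, MV.pair_sub_right, h2, h3, sub_zero]
        rw [MV.pair_smul_right] at h4
        exact (mul_eq_zero.mp h4).resolve_left (pow_ne_zero _ (by norm_num))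
      have hres := ih β'' hβ2 w' fun i => hw i.succ
      rw [hfam, MV.pair_comm, ← MV.pair_imul_right]
      exact hres
  intro w hw
  obtain ⟨q, rfl⟩ : ∃ q, p = q + 1 := ⟨p - 1, by omega⟩
  apply C q β _ w hw
  intro a ha
  rw [← MV.pair_imul_left]
  exact hyp a ha
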